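/- For every s ∈ ℂ with Re(s) > d + |μ| one has the Mellin-transform identity π^{−s} Γ(s) K^μ(H,z,w,s,Λ) = ∫₀^∞ ( θ^μ_t(H,z,w,Λ) − δ_{μ,z,Λ} · e^{−2πi⟨z,w⟩} ) t^{s−1} dt, both sides being absolutely convergent in this range. -/

import Mathlib

open scoped Real
open Complex MeasureTheory Filter

noncomputable section

/-- The diagonal Hermitian form `H(z,w) = ∑ i, h i * z i * conj (w i)` on `ℂ^d`. -/
def hermH {d : ℕ} (h : Fin d → ℝ) (z w : Fin d → ℂ) : ℂ :=
  ∑ i, (h i : ℂ) * z i * (starRingEnd ℂ) (w i)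

/-- The squared norm `|z|_H² = ∑ i, h i * |z i|²` associated to `H`. -/
def normHsq {d : ℕ} (h : Fin d → ℝ) (z : Fin d → ℂ) : ℝ :=
  ∑ i, h i * Complex.normSq (z i)

/-- The alternating form `⟨z,w⟩ = Im H(z,w)`. -/
def pairH {d : ℕ} (h : Fin d → ℝ) (z w : Fin d → ℂ) : ℝ := (hermH h z w).im

/-- The general term of the Eisenstein–Kronecker series:
`conj (z+λ)^μ ⬝ |z+λ|_H^(-2s) ⬝ e^{2πi⟨λ,w⟩}`. -/
def Kterm {d : ℕ} (h : Fin d → ℝ) (μ : Fin d → ℕ) (z w : Fin d → ℂ) (s : ℂ)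
    (l : Fin d → ℂ) : ℂ :=
  (∏ i, (starRingEnd ℂ) (z i + l i) ^ μ i) *
    ((normHsq h (z + l) : ℂ) ^ (-s)) *
    Complex.exp (2 * (π : ℂ) * Complex.I * (pairH h l w : ℂ))

/-- The general term of the theta series:
`conj (z+λ)^μ ⬝ e^{-πt|z+λ|_H²} ⬝ e^{2πi⟨λ,w⟩}`. -/
def thetaTerm {d : ℕ} (h : Fin d → ℝ) (μ : Fin d → ℕ) (t : ℝ) (z w : Fin d → ℂ)
    (l : Fin d → ℂ) : ℂ :=
  (∏ i, (starRingEnd ℂ) (z i + l i) ^ μ i) *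
    Complex.exp ((-(π * t * normHsq h (z + l)) : ℝ) : ℂ) *
    Complex.exp (2 * (π : ℂ) * Complex.I * (pairH h l w : ℂ))

lemma pairH_add_left {d : ℕ} (h : Fin d → ℝ) (a b w : Fin d → ℂ) :
    pairH h (a + b) w = pairH h a w + pairH h b w := by
  unfold pairH hermH
  rw [← Complex.add_im]
  congr 1
  rw [← Finset.sum_add_distrib]
  refine Finset.sum_congr rfl fun i _ => ?_
  rw [Pi.add_apply]
  ring

lemma pairH_zsmul_left {d : ℕ} (h : Fin d → ℝ) (n : ℤ) (a w : Fin d → ℂ) :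
    pairH h (n • a) w = (n : ℝ) * pairH h a w := by
  unfold pairH hermH
  have key : (∑ i, (h i : ℂ) * (n • a) i * (starRingEnd ℂ) (w i))
      = (n : ℂ) * ∑ i, (h i : ℂ) * a i * (starRingEnd ℂ) (w i) := by
    rw [Finset.mul_sum]
    refine Finset.sum_congr rfl fun i _ => ?_
    rw [Pi.smul_apply, zsmul_eq_mul]
    ring
  rw [key, Complex.mul_im]
  simp

/-- The dual lattice `Λ* = {l : ⟨l, Λ⟩ ⊆ ℤ}` with respect to `⟨·,·⟩ = Im H`. -/
def dualLattice {d : ℕ} (h : Fin d → ℝ) (Λ : Submodule ℤ (Fin d → ℂ)) :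
    Submodule ℤ (Fin d → ℂ) where
  carrier := {l | ∀ x ∈ Λ, ∃ n : ℤ, pairH h l x = (n : ℝ)}
  zero_mem' := by
    intro x _
    exact ⟨0, by simp [pairH, hermH]⟩
  add_mem' := by
    intro a b ha hb x hx
    obtain ⟨m, hm⟩ := ha x hx
    obtain ⟨n, hn⟩ := hb x hx
    exact ⟨m + n, by rw [pairH_add_left, hm, hn]; push_cast; ring⟩
  smul_mem' := by
    intro n a ha x hx
    obtain ⟨m, hm⟩ := ha x hx
    exact ⟨n * m, by rw [pairH_zsmul_left, hm]; push_cast; ring⟩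

/-- The volume of `ℂ^d/Λ` with respect to the metric induced by `H`, i.e. `(∏ i, h i)`
times the Euclidean covolume of `Λ`. -/
def covolH {d : ℕ} (h : Fin d → ℝ) (Λ : Submodule ℤ (Fin d → ℂ)) : ℝ :=
  (∏ i, h i) * ZLattice.covolume Λ

open Classical in
/-- `δ_{μ,v,M} = 1` if `v ∈ M` and `|μ| = 0`, and `0` otherwise. -/
def deltaEK {d : ℕ} (μ : Fin d → ℕ) (v : Fin d → ℂ) (M : Submodule ℤ (Fin d → ℂ)) : ℂ :=
  if v ∈ M ∧ ∑ i, μ i = 0 then 1 else 0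

end


section auxEK
open Set
open scoped NNReal ENNReal


-- product summability over Fin m → ℤ
lemma summable_prod_pi_int {m : ℕ} {f : ℤ → ℝ} (hf0 : ∀ k, 0 ≤ f k) (hf : Summable f) :
    Summable fun n : Fin m → ℤ => ∏ j, f (n j) := by
  induction m with
  | zero =>
      exact .of_finite
  | succ m ih =>
      have h2 := hf.mul_of_nonneg ih hf0 (fun n => Finset.prod_nonneg fun j _ => hf0 _)
      rw [← (Fin.consEquiv (fun _ : Fin (m+1) => ℤ)).summable_iff]
      refine h2.congr fun p => ?_
      simp only [Function.comp, Fin.consEquiv_apply]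
      rw [Fin.prod_univ_succ]
      simp

lemma summable_pi_int_rpow {ι : Type*} [Fintype ι] {r : ℝ} (hr : (Fintype.card ι : ℝ) < r) :
    Summable fun n : ι → ℤ => (1 + ‖fun i => (n i : ℝ)‖) ^ (-r) := by
  rcases isEmpty_or_nonempty ι with hι | hι
  · exact .of_finite
  have hm : 0 < (Fintype.card ι : ℝ) := by exact_mod_cast Fintype.card_pos
  set q : ℝ := r / Fintype.card ι with hq_def
  have hq : 1 < q := (one_lt_div hm).mpr hr
  have hq0 : 0 ≤ q := by linarith
  -- one-dimensional summability
  have hf : Summable (fun k : ℤ => (1 + |(k : ℝ)|) ^ (-q)) := by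
    refine Summable.of_norm_bounded_eventually (g := fun k : ℤ => |(k : ℝ)| ^ (-q))
      (Real.summable_abs_int_rpow hq) ?_
    have : {k : ℤ | ¬ ‖(1 + |(k:ℝ)|) ^ (-q)‖ ≤ |(k:ℝ)| ^ (-q)} ⊆ {0} := by
      intro k hk
      simp only [Set.mem_setOf_eq] at hk
      by_contra hk0
      apply hk
      have hkpos : (0:ℝ) < |(k:ℝ)| := by
        simp only [Set.mem_singleton_iff] at hk0
        have : (k:ℝ) ≠ 0 := Int.cast_ne_zero.mpr hk0
        positivity
      rw [Real.norm_eq_abs, _root_.abs_of_nonneg (Real.rpow_nonneg (by positivity) _)]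
      exact Real.rpow_le_rpow_of_nonpos hkpos (by linarith [abs_nonneg (k:ℝ)]) (by linarith)
    exact Filter.eventually_cofinite.mpr ((Set.finite_singleton 0).subset this)
  have hf0 : ∀ k : ℤ, 0 ≤ (1 + |(k : ℝ)|) ^ (-q) := fun k => Real.rpow_nonneg (by positivity) _
  -- product summability over ι → ℤ
  have hprod : Summable fun n : ι → ℤ => ∏ i, (1 + |(n i : ℝ)|) ^ (-q) := by
    have hS := summable_prod_pi_int (m := Fintype.card ι) hf0 hf
    rw [← (Equiv.arrowCongr (Fintype.equivFin ι) (Equiv.refl ℤ)).summable_iff] at hS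
    refine hS.congr fun n => ?_
    simp only [Function.comp, Equiv.arrowCongr_apply, Equiv.coe_refl]
    exact Fintype.prod_equiv (Fintype.equivFin ι).symm _ _ fun j => rfl
  refine hprod.of_nonneg_of_le (fun n => Real.rpow_nonneg (by positivity) _) fun n => ?_
  set N := ‖fun i => (n i : ℝ)‖ with hN
  have hN0 : 0 ≤ N := norm_nonneg _
  have h2 : ∏ i, (1 + |(n i : ℝ)|) ^ q ≤ (1 + N) ^ r := by
    calc ∏ i, (1 + |(n i : ℝ)|) ^ q ≤ ∏ _i : ι, (1 + N) ^ q := by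
          refine Finset.prod_le_prod (fun i _ => Real.rpow_nonneg (by positivity) _)
            (fun i _ => Real.rpow_le_rpow (by positivity) ?_ hq0)
          have := norm_le_pi_norm (fun i => (n i : ℝ)) i
          rw [Real.norm_eq_abs] at this
          linarith
      _ = ((1 + N) ^ q) ^ (Fintype.card ι : ℕ) := by
          rw [Finset.prod_const, Finset.card_univ]
      _ = (1 + N) ^ r := by
          rw [← Real.rpow_natCast ((1+N)^q) (Fintype.card ι), ← Real.rpow_mul (by positivity)]
          congr 1
          rw [hq_def, div_mul_cancel₀ _ hm.ne']
  calc (1 + N) ^ (-r) = ((1 + N) ^ r)⁻¹ := by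
        rw [Real.rpow_neg (by positivity)]
    _ ≤ (∏ i, (1 + |(n i : ℝ)|) ^ q)⁻¹ := by
        apply inv_anti₀ (Finset.prod_pos fun i _ => Real.rpow_pos_of_pos (by positivity) _) h2
    _ = ∏ i, (1 + |(n i : ℝ)|) ^ (-q) := by
        rw [← Finset.prod_inv_distrib]
        exact Finset.prod_congr rfl fun i _ => (Real.rpow_neg (by positivity) _).symm



lemma summable_lattice_core {d : ℕ} (Λ : Submodule ℤ (Fin d → ℂ)) [DiscreteTopology Λ]
    [IsZLattice ℝ Λ] (z : Fin d → ℂ) (f : Λ → ℝ) (hf0 : ∀ l, 0 ≤ f l) {r C : ℝ}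
    (hr : 2 * d < r)
    (hb : ∀ l : Λ, 1 ≤ ‖z + (l : Fin d → ℂ)‖ → f l ≤ C * ‖z + (l : Fin d → ℂ)‖ ^ (-r)) :
    Summable f := by
  classical
  let ι := Module.Free.ChooseBasisIndex ℤ Λ
  let b : Module.Basis ι ℤ Λ := Module.Free.chooseBasis ℤ Λ
  have hcard : (Fintype.card ι : ℝ) = 2 * d := by
    rw [← Module.finrank_eq_card_chooseBasisIndex, ZLattice.rank ℝ Λ]
    have : Module.finrank ℝ (Fin d → ℂ) = d * 2 := by
      rw [Module.finrank_pi_fintype ℝ]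
      simp [Complex.finrank_real_complex]
    rw [this]; push_cast; ring
  let B := b.ofZLatticeBasis ℝ Λ
  let e : (ι → ℤ) ≃ Λ := b.equivFun.symm.toEquiv
  rw [← e.summable_iff]
  -- the continuous linear coordinate map
  let T : (Fin d → ℂ) →L[ℝ] (ι → ℝ) := LinearMap.toContinuousLinearMap B.equivFun.toLinearMap
  set C₁ : ℝ := ‖T‖ + 1 with hC₁
  have hC₁pos : 0 < C₁ := by positivity
  have hTB : ∀ x : Fin d → ℂ, ‖B.equivFun x‖ ≤ C₁ * ‖x‖ := by
    intro x
    calc ‖B.equivFun x‖ = ‖T x‖ := rfl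
      _ ≤ ‖T‖ * ‖x‖ := T.le_opNorm x
      _ ≤ C₁ * ‖x‖ := by
          apply mul_le_mul_of_nonneg_right _ (norm_nonneg x)
          simp [hC₁]
  -- coordinates of lattice points
  have hcoord : ∀ n : ι → ℤ, B.equivFun ((e n : Λ) : Fin d → ℂ) = fun i => (n i : ℝ) := by
    intro n
    funext i
    rw [Module.Basis.equivFun_apply]
    show (B.repr _) i = _
    rw [Module.Basis.ofZLatticeBasis_repr_apply]
    congr 1
    show (b.repr (b.equivFun.symm n)) i = n i
    have : (b.repr (b.equivFun.symm n)) i = b.equivFun (b.equivFun.symm n) i := by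
      rw [Module.Basis.equivFun_apply]
    rw [this, LinearEquiv.apply_symm_apply]
  -- lower bound on lattice vector norms
  have key : ∀ n : ι → ℤ, ‖fun i => (n i : ℝ)‖ ≤ C₁ * ‖((e n : Λ) : Fin d → ℂ)‖ := by
    intro n
    rw [← hcoord n]
    exact hTB _
  -- finiteness of sublevel sets
  have hfin : ∀ R : ℝ, {n : ι → ℤ | ¬ R ≤ ‖fun i => (n i : ℝ)‖}.Finite := by
    intro R
    apply Set.Finite.subset (Set.Finite.pi (fun _ : ι => Set.finite_Icc (-⌈R⌉) ⌈R⌉))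
    intro n hn
    simp only [Set.mem_setOf_eq, not_le] at hn
    intro i _
    simp only [Set.mem_Icc]
    have h1 : |(n i : ℝ)| ≤ ‖fun i => (n i : ℝ)‖ := by
      have := norm_le_pi_norm (fun i => (n i : ℝ)) i
      rwa [Real.norm_eq_abs] at this
    have h2 : ((|n i| : ℤ) : ℝ) ≤ (⌈R⌉ : ℝ) := by
      push_cast
      exact le_trans h1 (le_trans hn.le (Int.le_ceil R))
    have h3 : |n i| ≤ ⌈R⌉ := by exact_mod_cast h2
    exact abs_le.mp h3
  -- the comparison
  set C' : ℝ := max C 0 * (1 / (2 * C₁)) ^ (-r) with hC'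
  have hsum : Summable fun n : ι → ℤ => C' * (1 + ‖fun i => (n i : ℝ)‖) ^ (-r) :=
    (summable_pi_int_rpow (by rw [hcard]; exact hr)).mul_left C'
  apply Summable.of_norm_bounded_eventually hsum
  rw [Filter.eventually_cofinite]
  apply Set.Finite.subset (hfin (max (2 * C₁ * ‖z‖ + 1) (C₁ * (1 + ‖z‖))))
  intro n hn
  simp only [Set.mem_setOf_eq] at hn ⊢
  intro hR
  apply hn
  -- now R ≤ N n; derive the bound
  set N := ‖fun i => (n i : ℝ)‖ with hN
  set v : Fin d → ℂ := z + ((e n : Λ) : Fin d → ℂ) with hv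
  have hNnn : 0 ≤ N := norm_nonneg _
  have hln : N / C₁ ≤ ‖((e n : Λ) : Fin d → ℂ)‖ := by
    rw [div_le_iff₀ hC₁pos, mul_comm]
    exact key n
  have hvlow : ‖((e n : Λ) : Fin d → ℂ)‖ - ‖z‖ ≤ ‖v‖ := by
    have := norm_sub_norm_le v z
    have hz : v - z = ((e n : Λ) : Fin d → ℂ) := by rw [hv]; abel
    calc ‖((e n : Λ) : Fin d → ℂ)‖ - ‖z‖ = ‖v - z‖ - ‖z‖ := by rw [hz]
      _ ≤ ‖v‖ := by
          have := norm_sub_le v z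
          linarith [norm_sub_le v z]
  have hv1 : 1 ≤ ‖v‖ := by
    have h1 : C₁ * (1 + ‖z‖) ≤ N := le_trans (le_max_right _ _) hR
    have : 1 + ‖z‖ ≤ N / C₁ := (le_div_iff₀ hC₁pos).mpr (by linarith [h1])
    linarith
  have hv2 : 1 / (2 * C₁) * (1 + N) ≤ ‖v‖ := by
    have h1 : 2 * C₁ * ‖z‖ + 1 ≤ N := le_trans (le_max_left _ _) hR
    have h2 : 1 / (2 * C₁) * (1 + N) ≤ N / C₁ - ‖z‖ := by
      rw [div_mul_eq_mul_div, one_mul, div_le_iff₀ (by positivity)]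
      have h3 : (N / C₁ - ‖z‖) * (2 * C₁) = 2 * N - 2 * C₁ * ‖z‖ := by
        field_simp
      rw [h3]
      linarith
    linarith [hln, hvlow]
  have hfb : f (e n) ≤ C * ‖v‖ ^ (-r) := hb (e n) hv1
  have hrn : ‖v‖ ^ (-r) ≤ (1 / (2 * C₁) * (1 + N)) ^ (-r) :=
    Real.rpow_le_rpow_of_nonpos (by positivity) hv2 (by linarith [hr, Nat.cast_nonneg (α := ℝ) d])
  rw [Real.norm_eq_abs]
  simp only [Function.comp_apply]
  rw [_root_.abs_of_nonneg (hf0 _)]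
  calc f (e n) ≤ C * ‖v‖ ^ (-r) := hfb
    _ ≤ max C 0 * ‖v‖ ^ (-r) := by
        apply mul_le_mul_of_nonneg_right (le_max_left _ _) (Real.rpow_nonneg (norm_nonneg _) _)
    _ ≤ max C 0 * ((1 / (2 * C₁)) * (1 + N)) ^ (-r) := by
        apply mul_le_mul_of_nonneg_left hrn (le_max_right _ _)
    _ = C' * (1 + N) ^ (-r) := by
        rw [hC', Real.mul_rpow (by positivity) (by positivity), mul_assoc]



lemma normHsq_nonneg {d : ℕ} (h : Fin d → ℝ) (hpos : ∀ i, 0 < h i) (v : Fin d → ℂ) :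
    0 ≤ normHsq h v :=
  Finset.sum_nonneg fun i _ => mul_nonneg (hpos i).le (Complex.normSq_nonneg _)

lemma normHsq_lower {d : ℕ} (hd : 1 ≤ d) (h : Fin d → ℝ) (hpos : ∀ i, 0 < h i) (v : Fin d → ℂ) :
    (Finset.univ.inf' (Finset.univ_nonempty_iff.mpr (Fin.pos_iff_nonempty.mp hd)) h) * ‖v‖ ^ 2
      ≤ normHsq h v := by
  set hmin := Finset.univ.inf' (Finset.univ_nonempty_iff.mpr (Fin.pos_iff_nonempty.mp hd)) h
    with hmin_def
  have hminpos : 0 < hmin := by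
    rw [hmin_def, Finset.lt_inf'_iff]
    exact fun i _ => hpos i
  set X := normHsq h v with hX
  have hX0 : 0 ≤ X := normHsq_nonneg h hpos v
  have hterm : ∀ i, hmin * ‖v i‖ ^ 2 ≤ X := by
    intro i
    have h1 : hmin ≤ h i := Finset.inf'_le h (Finset.mem_univ i)
    have h2 : hmin * ‖v i‖ ^ 2 ≤ h i * Complex.normSq (v i) := by
      rw [Complex.sq_norm]
      exact mul_le_mul_of_nonneg_right h1 (Complex.normSq_nonneg _)
    exact h2.trans (Finset.single_le_sum
      (fun j _ => mul_nonneg (hpos j).le (Complex.normSq_nonneg _)) (Finset.mem_univ i))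
  have hnorm : ‖v‖ ≤ Real.sqrt (X / hmin) := by
    rw [pi_norm_le_iff_of_nonneg (Real.sqrt_nonneg _)]
    intro i
    rw [show ‖v i‖ = |‖v i‖| from
      (_root_.abs_of_nonneg (norm_nonneg _)).symm, ← Real.sqrt_sq_eq_abs]
    apply Real.sqrt_le_sqrt
    rw [le_div_iff₀ hminpos, mul_comm]
    exact hterm i
  have h3 : ‖v‖ ^ 2 ≤ X / hmin := by
    calc ‖v‖ ^ 2 ≤ Real.sqrt (X / hmin) ^ 2 := by
          apply pow_le_pow_left₀ (norm_nonneg _) hnorm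
      _ = X / hmin := Real.sq_sqrt (by positivity)
  calc hmin * ‖v‖ ^ 2 ≤ hmin * (X / hmin) := by
        exact mul_le_mul_of_nonneg_left h3 hminpos.le
    _ = X := by field_simp

lemma normHsq_pos {d : ℕ} (hd : 1 ≤ d) (h : Fin d → ℝ) (hpos : ∀ i, 0 < h i) {v : Fin d → ℂ} (hv : v ≠ 0) : 0 < normHsq h v := by
  have h1 := normHsq_lower hd h hpos v
  have h2 : 0 < ‖v‖ := norm_pos_iff.mpr hv
  have hminpos : 0 < Finset.univ.inf' (Finset.univ_nonempty_iff.mpr (Fin.pos_iff_nonempty.mp hd)) h := by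
    rw [Finset.lt_inf'_iff]
    exact fun i _ => hpos i
  calc (0:ℝ) < _ * ‖v‖ ^ 2 := by positivity
    _ ≤ normHsq h v := h1

lemma normHsq_eq_zero_iff {d : ℕ} (hd : 1 ≤ d) (h : Fin d → ℝ) (hpos : ∀ i, 0 < h i) {v : Fin d → ℂ} : normHsq h v = 0 ↔ v = 0 := by
  constructor
  · intro hv
    by_contra hv0
    exact (normHsq_pos hd h hpos hv0).ne' hv
  · intro hv
    simp [hv, normHsq]

-- Lemma A
lemma summableA {d : ℕ} (hd : 1 ≤ d) (h : Fin d → ℝ) (hpos : ∀ i, 0 < h i) (Λ : Submodule ℤ (Fin d → ℂ)) [DiscreteTopology Λ] [IsZLattice ℝ Λ]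
    (μ : Fin d → ℕ) (z : Fin d → ℂ) {σ : ℝ}
    (hσ : (d : ℝ) + (∑ i, (μ i : ℝ)) < σ) :
    Summable fun l : Λ =>
      (∏ i, ‖z i + (l : Fin d → ℂ) i‖ ^ μ i) / normHsq h (z + l) ^ σ := by
  set hmin := Finset.univ.inf' (Finset.univ_nonempty_iff.mpr (Fin.pos_iff_nonempty.mp hd)) h
    with hmin_def
  have hminpos : 0 < hmin := by
    rw [hmin_def, Finset.lt_inf'_iff]; exact fun i _ => hpos i
  have hM0 : (0:ℝ) ≤ ∑ i, (μ i : ℝ) := Finset.sum_nonneg fun i _ => Nat.cast_nonneg _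
  have hd1 : (1:ℝ) ≤ d := by exact_mod_cast hd
  have hσ0 : 0 < σ := by linarith
  set M : ℝ := ∑ i, (μ i : ℝ) with hM_def
  apply summable_lattice_core Λ z _ ?_ (r := 2 * σ - M) (C := hmin ^ (-σ)) (by linarith) ?_
  · intro l
    apply div_nonneg (Finset.prod_nonneg fun i _ => pow_nonneg (norm_nonneg _) _)
      (Real.rpow_nonneg (normHsq_nonneg h hpos _) _)
  · intro l hl
    set v : Fin d → ℂ := z + (l : Fin d → ℂ) with hv
    have hv0 : (0:ℝ) < ‖v‖ := by linarith
    -- numerator bound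
    have hnum : (∏ i, ‖z i + (l : Fin d → ℂ) i‖ ^ μ i) ≤ ‖v‖ ^ M := by
      have h1 : ∀ i, ‖z i + (l : Fin d → ℂ) i‖ ≤ ‖v‖ := by
        intro i
        have := norm_le_pi_norm v i
        rwa [show v i = z i + (l : Fin d → ℂ) i from rfl] at this
      calc (∏ i, ‖z i + (l : Fin d → ℂ) i‖ ^ μ i)
          ≤ ∏ i, ‖v‖ ^ μ i := Finset.prod_le_prod
            (fun i _ => pow_nonneg (norm_nonneg _) _)
            (fun i _ => pow_le_pow_left₀ (norm_nonneg _) (h1 i) _)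
        _ = ‖v‖ ^ (∑ i, μ i) := by rw [Finset.prod_pow_eq_pow_sum]
        _ = ‖v‖ ^ M := by
            rw [hM_def, ← Real.rpow_natCast ‖v‖ (∑ i, μ i)]
            push_cast
            ring_nf
    -- denominator bound
    have hden : hmin ^ σ * ‖v‖ ^ (2 * σ) ≤ normHsq h v ^ σ := by
      have h2 := normHsq_lower hd h hpos v
      have h4 : (‖v‖:ℝ) ^ (2*σ) = (‖v‖ ^ (2:ℕ)) ^ σ := by
        rw [← Real.rpow_natCast ‖v‖ 2, ← Real.rpow_mul (norm_nonneg _)]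
        norm_num
      calc hmin ^ σ * ‖v‖ ^ (2*σ) = (hmin * ‖v‖ ^ 2) ^ σ := by
            rw [Real.mul_rpow hminpos.le (by positivity), h4]
        _ ≤ normHsq h v ^ σ := Real.rpow_le_rpow (by positivity) h2 hσ0.le
    have hdpos : (0:ℝ) < hmin ^ σ * ‖v‖ ^ (2 * σ) := by
      apply mul_pos (Real.rpow_pos_of_pos hminpos _) (Real.rpow_pos_of_pos hv0 _)
    calc (∏ i, ‖z i + (l : Fin d → ℂ) i‖ ^ μ i) / normHsq h (z + l) ^ σ
        ≤ ‖v‖ ^ M / (hmin ^ σ * ‖v‖ ^ (2 * σ)) := by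
          apply div_le_div₀ (Real.rpow_nonneg (norm_nonneg _) _) hnum hdpos hden
      _ = hmin ^ (-σ) * ‖v‖ ^ (-(2 * σ - M)) := by
          have h5 : ‖v‖ ^ (-(2 * σ - M)) = ‖v‖ ^ M / ‖v‖ ^ (2 * σ) := by
            rw [← Real.rpow_sub hv0]
            congr 1
            ring
          rw [h5, Real.rpow_neg hminpos.le]
          ring



-- Lemma B
lemma summableB {d : ℕ} (hd : 1 ≤ d) (h : Fin d → ℝ) (hpos : ∀ i, 0 < h i)
    (Λ : Submodule ℤ (Fin d → ℂ)) [DiscreteTopology Λ] [IsZLattice ℝ Λ]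
    (μ : Fin d → ℕ) (z : Fin d → ℂ) {t : ℝ} (ht : 0 < t) :
    Summable fun l : Λ =>
      (∏ i, ‖z i + (l : Fin d → ℂ) i‖ ^ μ i) *
        Real.exp (-(π * t * normHsq h (z + l))) := by
  set hmin := Finset.univ.inf' (Finset.univ_nonempty_iff.mpr (Fin.pos_iff_nonempty.mp hd)) h
    with hmin_def
  have hminpos : 0 < hmin := by
    rw [hmin_def, Finset.lt_inf'_iff]; exact fun i _ => hpos i
  set M : ℕ := ∑ i, μ i with hM_def
  set k : ℕ := d + M + 1 with hk_def
  set β : ℝ := π * t * hmin with hβ_def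
  have hβpos : 0 < β := by positivity
  apply summable_lattice_core Λ z _ ?_ (r := 2 * (k:ℝ) - M)
      (C := Nat.factorial k / β ^ k) ?_ ?_
  · intro l
    apply mul_nonneg (Finset.prod_nonneg fun i _ => pow_nonneg (norm_nonneg _) _)
      (Real.exp_nonneg _)
  · have hkval : (k:ℝ) = (d:ℝ) + (M:ℝ) + 1 := by rw [hk_def]; push_cast; ring
    have hM0 : (0:ℝ) ≤ (M:ℝ) := Nat.cast_nonneg _
    rw [hkval]
    linarith
  · intro l hl
    set v : Fin d → ℂ := z + (l : Fin d → ℂ) with hv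
    have hv0 : (0:ℝ) < ‖v‖ := by linarith
    set x : ℝ := π * t * normHsq h v with hx_def
    have hxβ : β * ‖v‖ ^ 2 ≤ x := by
      rw [hx_def, hβ_def, mul_assoc, mul_assoc]
      have := normHsq_lower hd h hpos v
      have hπt : (0:ℝ) < π * t := by positivity
      nlinarith
    have hxpos : 0 < x := lt_of_lt_of_le (by positivity) hxβ
    -- numerator bound
    have hnum : (∏ i, ‖z i + (l : Fin d → ℂ) i‖ ^ μ i) ≤ ‖v‖ ^ M := by
      have h1 : ∀ i, ‖z i + (l : Fin d → ℂ) i‖ ≤ ‖v‖ := by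
        intro i
        have := norm_le_pi_norm v i
        rwa [show v i = z i + (l : Fin d → ℂ) i from rfl] at this
      calc (∏ i, ‖z i + (l : Fin d → ℂ) i‖ ^ μ i)
          ≤ ∏ i, ‖v‖ ^ μ i := Finset.prod_le_prod
            (fun i _ => pow_nonneg (norm_nonneg _) _)
            (fun i _ => pow_le_pow_left₀ (norm_nonneg _) (h1 i) _)
        _ = ‖v‖ ^ M := by rw [Finset.prod_pow_eq_pow_sum]
    -- exponential bound
    have hexp : Real.exp (-x) ≤ Nat.factorial k / (β ^ k * ‖v‖ ^ (2 * k)) := by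
      have h2 : (x ^ k / Nat.factorial k : ℝ) ≤ Real.exp x := Real.pow_div_factorial_le_exp _ hxpos.le k
      have h4 : β ^ k * ‖v‖ ^ (2 * k) ≤ x ^ k := by
        calc β ^ k * ‖v‖ ^ (2 * k) = (β * ‖v‖ ^ 2) ^ k := by
              rw [pow_mul, ← mul_pow]
          _ ≤ x ^ k := pow_le_pow_left₀ (by positivity) hxβ k
      have hpk : (0:ℝ) < x ^ k / Nat.factorial k := by positivity
      calc Real.exp (-x) = (Real.exp x)⁻¹ := Real.exp_neg x
        _ ≤ (x ^ k / Nat.factorial k)⁻¹ := inv_anti₀ hpk h2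
        _ = (Nat.factorial k : ℝ) / x ^ k := by rw [inv_div]
        _ ≤ (Nat.factorial k : ℝ) / (β ^ k * ‖v‖ ^ (2 * k)) := by
            gcongr
            
    calc (∏ i, ‖z i + (l : Fin d → ℂ) i‖ ^ μ i) * Real.exp (-(π * t * normHsq h (z + l)))
        ≤ ‖v‖ ^ M * (Nat.factorial k / (β ^ k * ‖v‖ ^ (2 * k))) := by
          apply mul_le_mul hnum hexp (Real.exp_nonneg _) (by positivity)
      _ = Nat.factorial k / β ^ k * ‖v‖ ^ (-(2 * (k:ℝ) - (M:ℝ))) := by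
          have h5 : ‖v‖ ^ (-(2 * (k:ℝ) - (M:ℝ))) = ‖v‖ ^ (M:ℕ) / ‖v‖ ^ (2 * k : ℕ) := by
            rw [← Real.rpow_natCast ‖v‖ M, ← Real.rpow_natCast ‖v‖ (2*k), ← Real.rpow_sub hv0]
            congr 1
            push_cast
            ring
          rw [h5]
          ring



-- Integrability of a tsum given summability of integrals of norms
lemma integrable_tsum_of_summable_integral_norm {ι α : Type*} [Countable ι]
    [MeasurableSpace α] {μ : Measure α} {F : ι → α → ℂ}
    (hF_int : ∀ i, Integrable (F i) μ)
    (hF_sum : Summable fun i ↦ ∫ a, ‖F i a‖ ∂μ) :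
    Integrable (fun a => ∑' i, F i a) μ := by
  have hf'' : ∀ i, AEMeasurable (fun x => (‖F i x‖₊ : ENNReal)) μ :=
    fun i => (hF_int i).aestronglyMeasurable.enorm
  have hf' : ∑' i, ∫⁻ a, ‖F i a‖₊ ∂μ ≠ ⊤ := by
    have heq : ∀ i : ι, ∫⁻ a, ‖F i a‖₊ ∂μ = ‖(∫ a, ‖F i a‖ ∂μ)‖₊ := by
      intro i
      rw [lintegral_coe_eq_integral (fun a => ‖F i a‖₊) (hF_int i).norm, ENNReal.coe_nnreal_eq,
        coe_nnnorm, Real.norm_of_nonneg (integral_nonneg fun a => norm_nonneg (F i a))]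
      simp [coe_nnnorm]
    rw [funext heq, ← ENNReal.coe_tsum]
    · exact ENNReal.coe_ne_top
    · simp_rw [← NNReal.summable_coe, coe_nnnorm]
      exact hF_sum.abs
  have hhh : ∀ᵐ a ∂μ, Summable fun n => (‖F n a‖₊ : ℝ) := by
    rw [← lintegral_tsum hf''] at hf'
    refine (ae_lt_top' (AEMeasurable.ennreal_tsum hf'') hf').mono fun x hx => ?_
    rw [← ENNReal.tsum_coe_ne_top_iff_summable_coe]
    exact hx.ne
  constructor
  · apply aestronglyMeasurable_of_tendsto_ae (atTop : Filter (Finset ι))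
      (fun s => (Finset.aestronglyMeasurable_sum s fun i _ => (hF_int i).aestronglyMeasurable))
    filter_upwards [hhh] with a ha
    have := ha.of_norm.hasSum
    simp only [Finset.sum_apply]
    exact this
  · show (∫⁻ a, ‖∑' i, F i a‖₊ ∂μ) < ⊤
    calc ∫⁻ a, ‖∑' i, F i a‖₊ ∂μ ≤ ∫⁻ a, ∑' i, (‖F i a‖₊ : ENNReal) ∂μ := by
          apply lintegral_mono
          intro a
          by_cases hsa : Summable fun i => F i a
          · have hnn : Summable fun i => ‖F i a‖₊ := by
              rw [← NNReal.summable_coe]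
              simpa [coe_nnnorm] using hsa.norm
            calc ((‖∑' i, F i a‖₊ : ℝ≥0) : ENNReal) ≤ ((∑' i, ‖F i a‖₊ : ℝ≥0) : ENNReal) :=
                  ENNReal.coe_le_coe.mpr (nnnorm_tsum_le hnn)
              _ = ∑' i, (‖F i a‖₊ : ENNReal) := ENNReal.coe_tsum hnn
          · simp only
            rw [tsum_eq_zero_of_not_summable hsa]
            simp
      _ = ∑' i, ∫⁻ a, ‖F i a‖₊ ∂μ := lintegral_tsum hf''
      _ < ⊤ := hf'.lt_top



-- integrability of t ^ (s-1) * (A * exp (-c * t)) on Ioi 0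
lemma integrable_cpow_mul_exp {s : ℂ} (hs : 0 < s.re) {c : ℝ} (hc : 0 < c) (A : ℂ) :
    IntegrableOn (fun t : ℝ => (t : ℂ) ^ (s - 1) * (A * Real.exp (-c * t))) (Ioi 0) volume := by
  have h0 := Complex.GammaIntegral_convergent hs
  rw [← mul_zero c, ← integrableOn_Ioi_comp_mul_left_iff _ _ hc] at h0
  have h1 := (h0.const_mul (1 / (c : ℂ) ^ (s - 1))).const_mul A
  refine IntegrableOn.congr_fun h1 (fun t (ht : 0 < t) => ?_) measurableSet_Ioi
  have hcne : (c : ℂ) ^ (s - 1) ≠ 0 := by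
    rw [Ne, Complex.cpow_eq_zero_iff, not_and_or]
    exact Or.inl (Complex.ofReal_ne_zero.mpr hc.ne')
  rw [show ((c * t : ℝ) : ℂ) = (c : ℂ) * (t : ℂ) by push_cast; ring]
  rw [Complex.mul_cpow_ofReal_nonneg hc.le ht.le]
  rw [Complex.ofReal_exp]
  field_simp
  ring_nf
  rw [Complex.ofReal_exp]
  ring

-- value of the integral of the norm
lemma integral_norm_cpow_mul_exp {s : ℂ} (hs : 0 < s.re) {c : ℝ} (hc : 0 < c) (A : ℂ) :
    ∫ t in Ioi (0:ℝ), ‖(t : ℂ) ^ (s - 1) * (A * Real.exp (-c * t))‖ =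
      Real.Gamma s.re * ‖A‖ / c ^ s.re := by
  have h0 : ∫ t in Ioi (0:ℝ), ‖(t : ℂ) ^ (s - 1) * (A * Real.exp (-c * t))‖ =
      ∫ t in Ioi (0:ℝ), ‖A‖ * (t ^ (s.re - 1) * Real.exp (-(c * t))) := by
    refine setIntegral_congr_fun measurableSet_Ioi (fun t (ht : 0 < t) => ?_)
    rw [norm_mul, norm_mul, Complex.norm_cpow_eq_rpow_re_of_pos ht,
      Complex.sub_re, Complex.one_re, Complex.norm_real, Real.norm_eq_abs, Real.abs_exp, neg_mul]
    ring
  rw [h0, integral_const_mul, Real.integral_rpow_mul_exp_neg_mul_Ioi hs hc, one_div,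
    Real.inv_rpow hc.le]
  field_simp

end auxEK

/-- For every `s` with `Re s > d + |μ|` one has
`π^{-s} Γ(s) K^μ(H,z,w,s,Λ) = ∫₀^∞ (θ^μ_t(H,z,w,Λ) - δ_{μ,z,Λ} e^{-2πi⟨z,w⟩}) t^{s-1} dt`,
both sides being absolutely convergent in this range.  (Since `Re s > d ≥ 1 > 0`, the
term of the `K`-series at `λ = -z` vanishes, so the sum over all of `Λ` agrees with the
sum over `λ ≠ -z`.) -/
theorem eisensteinKronecker_mellin
    {d : ℕ} (hd : 1 ≤ d) (h : Fin d → ℝ) (hpos : ∀ i, 0 < h i)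
    (Λ : Submodule ℤ (Fin d → ℂ)) [DiscreteTopology Λ] [IsZLattice ℝ Λ]
    (μ : Fin d → ℕ) (z w : Fin d → ℂ) (s : ℂ)
    (hs : (d : ℝ) + (∑ i, (μ i : ℝ)) < s.re) :
    (Summable fun l : {l : Λ // (l : Fin d → ℂ) ≠ -z} =>
        ‖Kterm h μ z w s ((l : Λ) : Fin d → ℂ)‖) ∧
    IntegrableOn
      (fun t : ℝ =>
        ((∑' l : Λ, thetaTerm h μ t z w (l : Fin d → ℂ)) -
            deltaEK μ z Λ * Complex.exp (-(2 * (π : ℂ) * Complex.I * (pairH h z w : ℂ)))) *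
          (t : ℂ) ^ (s - 1))
      (Set.Ioi (0 : ℝ)) MeasureTheory.volume ∧
    (π : ℂ) ^ (-s) * Complex.Gamma s * (∑' l : Λ, Kterm h μ z w s (l : Fin d → ℂ)) =
      ∫ t in Set.Ioi (0 : ℝ),
        ((∑' l : Λ, thetaTerm h μ t z w (l : Fin d → ℂ)) -
            deltaEK μ z Λ * Complex.exp (-(2 * (π : ℂ) * Complex.I * (pairH h z w : ℂ)))) *
          (t : ℂ) ^ (s - 1) := by
  classical
  have hd1 : (1:ℝ) ≤ (d:ℝ) := by exact_mod_cast hd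
  have hM0 : (0:ℝ) ≤ ∑ i, (μ i : ℝ) := Finset.sum_nonneg fun i _ => Nat.cast_nonneg _
  have hs0 : 0 < s.re := by linarith
  set σ := s.re with hσ_def
  -- basic objects
  set P : Λ → ℂ := fun l => ∏ i, (starRingEnd ℂ) (z i + (l : Fin d → ℂ) i) ^ μ i with hP_def
  set aa : Λ → ℂ := fun l =>
    P l * Complex.exp (2 * (π:ℂ) * Complex.I * ((pairH h (l : Fin d → ℂ) w : ℝ) : ℂ)) with haa_def
  set p : Λ → ℝ := fun l => normHsq h (z + (l : Fin d → ℂ)) with hp_def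
  have hp0 : ∀ l, 0 ≤ p l := fun l => normHsq_nonneg h hpos _
  -- norm of the unit exponential
  have hexpnorm : ∀ x : ℝ, ‖Complex.exp (2 * (π:ℂ) * Complex.I * (x:ℂ))‖ = 1 := by
    intro x
    have : (2 * (π:ℂ) * Complex.I * (x:ℂ)) = ((2 * π * x : ℝ) : ℂ) * Complex.I := by
      push_cast; ring
    rw [this, Complex.norm_exp_ofReal_mul_I]
  have hnormP : ∀ l : Λ, ‖P l‖ = ∏ i, ‖z i + (l : Fin d → ℂ) i‖ ^ μ i := by
    intro l
    rw [hP_def]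
    simp only [norm_prod, norm_pow]
    refine Finset.prod_congr rfl fun i _ => ?_
    rw [Complex.norm_conj]
  have hnorma : ∀ l : Λ, ‖aa l‖ = ∏ i, ‖z i + (l : Fin d → ℂ) i‖ ^ μ i := by
    intro l
    rw [haa_def]
    simp only [norm_mul]
    rw [hexpnorm, hnormP, mul_one]
  -- summability of the K-series (Lemma A)
  have hA : Summable fun l : Λ => ‖aa l‖ / p l ^ σ := by
    have := summableA hd h hpos Λ μ z (σ := σ) hs
    refine this.congr fun l => ?_
    rw [hnorma l]
  -- p l = 0 iff l = -z
  have hptz : ∀ l : Λ, p l = 0 ↔ (l : Fin d → ℂ) = -z := by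
    intro l
    rw [hp_def]
    simp only
    rw [normHsq_eq_zero_iff hd h hpos]
    constructor
    · intro hzl
      have := congrArg (fun v => v - z) hzl
      simpa [sub_eq_add_neg, add_comm] using this
    · intro hzl
      rw [hzl]
      abel
  -- norm of theta terms
  have hθnorm : ∀ (t : ℝ) (l : Λ), ‖thetaTerm h μ t z w (l : Fin d → ℂ)‖ =
      (∏ i, ‖z i + (l : Fin d → ℂ) i‖ ^ μ i) * Real.exp (-(π * t * p l)) := by
    intro t l
    rw [thetaTerm]
    simp only [norm_mul]
    rw [hexpnorm, mul_one]
    congr 1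
    · exact hnormP l
    · rw [Complex.norm_exp]
      simp [hp_def]
  -- summability of theta terms
  have hθsum : ∀ t : ℝ, 0 < t → Summable fun l : Λ => thetaTerm h μ t z w (l : Fin d → ℂ) := by
    intro t ht
    apply Summable.of_norm
    refine (summableB hd h hpos Λ μ z ht).congr fun l => ?_
    rw [hθnorm t l]
  -- theta term as a * rexp
  have hθeq : ∀ (t : ℝ) (l : Λ),
      thetaTerm h μ t z w (l : Fin d → ℂ) = aa l * Real.exp (-π * p l * t) := by
    intro t l
    rw [thetaTerm, haa_def]
    simp only
    rw [Complex.ofReal_exp]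
    have harg : (-(π * t * normHsq h (z + (l : Fin d → ℂ))) : ℝ) = -π * p l * t := by
      rw [hp_def]; ring
    rw [harg]
    ring
  -- the key HasSum identity for theta minus delta
  have hF : ∀ t ∈ Set.Ioi (0:ℝ), HasSum
      (fun l : Λ => if p l = 0 then 0 else aa l * Real.exp (-π * p l * t))
      ((∑' l : Λ, thetaTerm h μ t z w (l : Fin d → ℂ)) -
        deltaEK μ z Λ * Complex.exp (-(2 * (π:ℂ) * Complex.I * ((pairH h z w : ℝ) : ℂ)))) := by
    intro t ht
    rw [Set.mem_Ioi] at ht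
    have hT := (hθsum t ht).hasSum
    by_cases hzΛ : z ∈ Λ
    · set l₀ : Λ := ⟨-z, neg_mem hzΛ⟩ with hl₀_def
      have hpz : ∀ l : Λ, p l = 0 ↔ l = l₀ := by
        intro l
        rw [hptz l]
        constructor
        · intro hc; exact Subtype.ext hc
        · intro hc; rw [hc]
      -- the value of the theta term at l₀
      have hTl₀ : thetaTerm h μ t z w ((l₀ : Λ) : Fin d → ℂ) =
          deltaEK μ z Λ * Complex.exp (-(2 * (π:ℂ) * Complex.I * ((pairH h z w : ℝ) : ℂ))) := by
        rw [thetaTerm]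
        have hz0 : ∀ i, z i + (l₀ : Fin d → ℂ) i = 0 := fun i => by
          show z i + (-z) i = 0; simp
        have hzv : z + ((l₀ : Λ) : Fin d → ℂ) = 0 := by
          funext i; exact hz0 i
        have h1 : (∏ i, (starRingEnd ℂ) (z i + (l₀ : Fin d → ℂ) i) ^ μ i) =
            if (∑ i, μ i) = 0 then 1 else 0 := by
          by_cases hμ : (∑ i, μ i) = 0
          · rw [if_pos hμ]
            apply Finset.prod_eq_one
            intro i _
            have : μ i = 0 := Finset.sum_eq_zero_iff.mp hμ i (Finset.mem_univ i)
            rw [hz0 i, this, pow_zero]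
          · rw [if_neg hμ]
            obtain ⟨i, _, hi⟩ := Finset.exists_ne_zero_of_sum_ne_zero hμ
            apply Finset.prod_eq_zero (Finset.mem_univ i)
            rw [hz0 i, map_zero, zero_pow hi]
        have h2 : Complex.exp ((-(π * t * normHsq h (z + ((l₀ : Λ) : Fin d → ℂ))) : ℝ) : ℂ) = 1 := by
          rw [hzv]
          simp [normHsq]
        have h3 : pairH h ((l₀ : Λ) : Fin d → ℂ) w = - pairH h z w := by
          have := pairH_zsmul_left h (-1) z w
          rw [neg_one_zsmul] at this
          show pairH h (-z) w = _
          rw [this]; push_cast; ring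
        rw [h1, h2, h3, deltaEK]
        by_cases hμ : (∑ i, μ i) = 0
        · rw [if_pos hμ, if_pos ⟨hzΛ, hμ⟩]
          simp only [one_mul, mul_one]
          congr 1
          push_cast
          ring
        · rw [if_neg hμ, if_neg (fun hc => hμ hc.2)]
          simp
      have hupdate : (fun l : Λ => if p l = 0 then 0 else aa l * Real.exp (-π * p l * t)) =
          Function.update (fun l : Λ => thetaTerm h μ t z w (l : Fin d → ℂ)) l₀ 0 := by
        funext l
        by_cases hl : l = l₀
        · rw [hl, if_pos ((hpz l₀).mpr rfl), Function.update_self]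
        · rw [if_neg (fun hc => hl ((hpz l).mp hc)), Function.update_of_ne hl, hθeq t l]
      rw [hupdate]
      have := hT.update l₀ 0
      convert this using 1
      · rfl
      rw [hTl₀]
      ring
    · have hpne : ∀ l : Λ, p l ≠ 0 := by
        intro l hc
        exact hzΛ (by
          have : (l : Fin d → ℂ) = -z := (hptz l).mp hc
          have hm : -(l : Fin d → ℂ) ∈ Λ := neg_mem l.2
          rwa [this, neg_neg] at hm)
      have hfun : (fun l : Λ => if p l = 0 then 0 else aa l * Real.exp (-π * p l * t)) =
          fun l : Λ => thetaTerm h μ t z w (l : Fin d → ℂ) := by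
        funext l
        rw [if_neg (hpne l), hθeq t l]
      rw [hfun, deltaEK, if_neg (fun hc => hzΛ hc.1)]
      simpa using hT
  -- apply the Mellin machine
  have key := hasSum_mellin_pi_mul₀ (a := aa) (p := p) (s := s)
    (F := fun t => (∑' l : Λ, thetaTerm h μ t z w (l : Fin d → ℂ)) -
      deltaEK μ z Λ * Complex.exp (-(2 * (π:ℂ) * Complex.I * ((pairH h z w : ℝ) : ℂ))))
    hp0 hs0 hF hA
  -- identify the summands with Kterm
  have hkterm : ∀ l : Λ, (π:ℂ) ^ (-s) * Complex.Gamma s * aa l / (p l : ℂ) ^ s =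
      (π:ℂ) ^ (-s) * Complex.Gamma s * Kterm h μ z w s (l : Fin d → ℂ) := by
    intro l
    rw [Kterm, haa_def]
    simp only
    rw [div_eq_mul_inv, ← Complex.cpow_neg]
    rw [hP_def]
    ring_nf
    rfl
  refine ⟨?_, ?_, ?_⟩
  · -- summability of the K-series norms
    have hAsub := hA.comp_injective
      (Subtype.val_injective : Function.Injective
        (Subtype.val : {l : Λ // (l : Fin d → ℂ) ≠ -z} → Λ))
    refine hAsub.congr fun l => ?_
    have hvne : z + ((l : Λ) : Fin d → ℂ) ≠ 0 := by
      intro hc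
      exact l.2 (by
        have := eq_neg_of_add_eq_zero_right hc
        exact this)
    have hppos : 0 < p l := lt_of_le_of_ne (hp0 _) (Ne.symm (fun hc =>
      hvne ((normHsq_eq_zero_iff hd h hpos).mp hc)))
    show ‖aa (l : Λ)‖ / p (l : Λ) ^ σ = ‖Kterm h μ z w s ((l : Λ) : Fin d → ℂ)‖
    rw [Kterm]
    simp only [norm_mul]
    rw [hexpnorm, mul_one]
    have e1 : ‖(∏ i, (starRingEnd ℂ) (z i + ((l : Λ) : Fin d → ℂ) i) ^ μ i : ℂ)‖ =
        ∏ i, ‖z i + ((l : Λ) : Fin d → ℂ) i‖ ^ μ i := by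
      simp only [norm_prod, norm_pow]
      exact Finset.prod_congr rfl fun i _ => by rw [Complex.norm_conj]
    have hcpow : ‖((normHsq h (z + ((l : Λ) : Fin d → ℂ)) : ℝ) : ℂ) ^ (-s)‖ = p (l : Λ) ^ (-σ) := by
      rw [Complex.norm_cpow_eq_rpow_re_of_pos hppos, Complex.neg_re]
    rw [e1, hcpow, hnorma (l : Λ), Real.rpow_neg (hp0 _), div_eq_mul_inv]
  · -- integrability
    set G : Λ → ℝ → ℂ := fun l t =>
      (t:ℂ) ^ (s - 1) * (if p l = 0 then 0 else aa l * Real.exp (-π * p l * t)) with hG_def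
    have hGint : ∀ l : Λ, Integrable (G l) (volume.restrict (Set.Ioi 0)) := by
      intro l
      by_cases hpl : p l = 0
      · refine (integrable_zero _ _ _).congr ?_
        filter_upwards with t
        rw [hG_def]
        simp [hpl]
      · have hppos : 0 < p l := lt_of_le_of_ne (hp0 _) (Ne.symm hpl)
        have h1 := integrable_cpow_mul_exp hs0 (mul_pos Real.pi_pos hppos) (aa l)
        refine h1.congr_fun (fun t ht => ?_) measurableSet_Ioi
        rw [hG_def]
        simp only [if_neg hpl]
        congr 2
        ring
    have hGnorm : ∀ l : Λ, (∫ t in Set.Ioi (0:ℝ), ‖G l t‖) ≤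
        Real.Gamma σ / π ^ σ * (‖aa l‖ / p l ^ σ) := by
      intro l
      by_cases hpl : p l = 0
      · have : (∫ t in Set.Ioi (0:ℝ), ‖G l t‖) = 0 := by
          rw [hG_def]
          simp [hpl]
        rw [this, hpl, Real.zero_rpow (by positivity : σ ≠ 0)]
        simp
      · have hppos : 0 < p l := lt_of_le_of_ne (hp0 _) (Ne.symm hpl)
        have h1 := integral_norm_cpow_mul_exp hs0 (mul_pos Real.pi_pos hppos) (aa l)
        have h2 : (∫ t in Set.Ioi (0:ℝ), ‖G l t‖) =
            ∫ t in Set.Ioi (0:ℝ), ‖(t:ℂ) ^ (s - 1) * (aa l * Real.exp (-(π * p l) * t))‖ := by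
          apply setIntegral_congr_fun measurableSet_Ioi
          intro t ht
          rw [hG_def]
          simp only [if_neg hpl]
          congr 3
          ring
        rw [h2, h1, Real.mul_rpow Real.pi_pos.le (hp0 l)]
        apply le_of_eq
        rw [← hσ_def, div_mul_div_comm]
    have hGsum : Summable fun l : Λ => ∫ t in Set.Ioi (0:ℝ), ‖G l t‖ := by
      refine Summable.of_nonneg_of_le
        (fun l => integral_nonneg fun t => norm_nonneg _) hGnorm ?_
      exact hA.mul_left _
    have hInt := integrable_tsum_of_summable_integral_norm hGint hGsum
    refine hInt.congr ?_
    filter_upwards [ae_restrict_mem measurableSet_Ioi] with t ht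
    rw [hG_def]
    simp only
    rw [tsum_mul_left, (hF t ht).tsum_eq, mul_comm]
  · -- the Mellin identity
    have key' : HasSum (fun l : Λ => (π:ℂ) ^ (-s) * Complex.Gamma s *
        Kterm h μ z w s (l : Fin d → ℂ)) (mellin (fun t =>
          (∑' l : Λ, thetaTerm h μ t z w (l : Fin d → ℂ)) -
          deltaEK μ z Λ * Complex.exp (-(2 * (π:ℂ) * Complex.I * ((pairH h z w : ℝ) : ℂ)))) s) := by
      exact (funext hkterm : _) ▸ key
    have h4 : (π:ℂ) ^ (-s) * Complex.Gamma s * (∑' l : Λ, Kterm h μ z w s (l : Fin d → ℂ)) =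
        ∑' l : Λ, (π:ℂ) ^ (-s) * Complex.Gamma s * Kterm h μ z w s (l : Fin d → ℂ) := by
      rw [tsum_mul_left]
    rw [h4, key'.tsum_eq]
    unfold mellin
    apply setIntegral_congr_fun measurableSet_Ioi
    intro t ht
    dsimp only
    rw [smul_eq_mul, mul_comm]
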